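/- In Skew[L|m], for 1 ≤ i < j ≤ m and h ≤ qᵢ: D_{ji}^h (w|⋯ i^{(qᵢ)} ⋯ j^{(qⱼ)} ⋯) = ((qⱼ+h)!/qⱼ!) (w|⋯ i^{(qᵢ-h)} ⋯ j^{(qⱼ+h)} ⋯), and the result is 0 if h > qᵢ. -/
import Mathlib


/-- The letterplace algebra `Skew[L|m]`: the free skew-symmetric `ℤ`-algebra on the
letterplace variables `(x|i)`. -/
abbrev LetterplaceAlgebra (L : Type*) (m : ℕ) : Type _ :=
  ExteriorAlgebra ℤ ((L × Fin m) →₀ ℤ)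

/-- The letterplace variable `(x|i)`. -/
noncomputable def lpVar {L : Type*} {m : ℕ} (x : L) (i : Fin m) : LetterplaceAlgebra L m :=
  ExteriorAlgebra.ι ℤ (Finsupp.single (x, i) 1)

/-- The biproduct `(w | 1^{(q 1)} ⋯ m^{(q m)})` of a word `w` of length `ℓ` in `Skew[L|m]`:
by the Laplace expansion, it equals the sum over all place assignments `f : Fin ℓ → Fin m`
with `|f⁻¹(p)| = q p` of the products `(w₀|f 0)⋯(w_{ℓ-1}|f(ℓ-1))` (taken in the original
order of the word, which accounts for the shuffle signs of the coproduct slices).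
It is zero when `ℓ ≠ q 1 + ⋯ + q m`. -/
noncomputable def biproduct {L : Type*} {m : ℕ} [DecidableEq L] {ℓ : ℕ}
    (w : Fin ℓ → L) (q : Fin m → ℕ) : LetterplaceAlgebra L m :=
  ∑ f ∈ Finset.univ.filter
      (fun f : Fin ℓ → Fin m => ∀ p, (Finset.univ.filter fun t => f t = p).card = q p),
    (List.ofFn fun t => lpVar (w t) (f t)).prod

section Aux

variable {A : Type*} [Ring A]

lemma D_one' (D : Module.End ℤ A) (hL : ∀ x y : A, D (x * y) = D x * y + x * D y) :
    D 1 = 0 := by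
  have h := hL 1 1
  simp only [one_mul, mul_one] at h
  exact left_eq_add.mp h

lemma D_ofFn_prod (D : Module.End ℤ A) (hL : ∀ x y : A, D (x * y) = D x * y + x * D y) :
    ∀ {n : ℕ} (g : Fin n → A),
    D (List.ofFn g).prod = ∑ t, (List.ofFn (Function.update g t (D (g t)))).prod := by
  intro n
  induction n with
  | zero => intro g; simp [D_one' D hL]
  | succ n ih =>
    intro g
    rw [List.ofFn_succ, List.prod_cons, hL, ih (fun t => g t.succ), Fin.sum_univ_succ]
    congr 1
    · rw [List.ofFn_succ, List.prod_cons, Function.update_self]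
      have : (fun i : Fin n => Function.update g 0 (D (g 0)) i.succ)
          = fun i : Fin n => g i.succ := by
        funext t; exact Function.update_of_ne (Fin.succ_ne_zero t) _ _
      rw [this]
    · rw [Finset.mul_sum]
      refine Finset.sum_congr rfl fun t _ => ?_
      rw [List.ofFn_succ, List.prod_cons,
        Function.update_of_ne (Fin.succ_ne_zero t).symm]
      have : (fun i : Fin n => Function.update g t.succ (D (g t.succ)) i.succ)
          = Function.update (fun u : Fin n => g u.succ) t (D (g t.succ)) := by
        funext s
        rcases eq_or_ne s t with rfl | hst
        · simp
        · rw [Function.update_of_ne hst, Function.update_of_ne (by simpa using hst)]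
      rw [this]

end Aux

section Main

variable {L : Type*} [DecidableEq L] {m : ℕ} {ℓ : ℕ}

lemma card_update_filter (f : Fin ℓ → Fin m) (t : Fin ℓ) {a b : Fin m} (hab : a ≠ b)
    (hft : f t = a) (p : Fin m) :
    (Finset.univ.filter fun s => Function.update f t b s = p).card =
      if p = b then (Finset.univ.filter fun s => f s = p).card + 1
      else if p = a then (Finset.univ.filter fun s => f s = p).card - 1
      else (Finset.univ.filter fun s => f s = p).card := by
  rcases eq_or_ne p b with hpb | hpb
  · subst hpb
    rw [if_pos rfl]
    have hset : (Finset.univ.filter fun s => Function.update f t p s = p)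
        = insert t (Finset.univ.filter fun s => f s = p) := by
      ext s
      simp only [Finset.mem_filter, Finset.mem_insert, Finset.mem_univ, true_and,
        Function.update_apply]
      rcases eq_or_ne s t with rfl | hst
      · simp
      · simp [hst]
    rw [hset, Finset.card_insert_of_notMem (by simp [hft, hab])]
  · rw [if_neg hpb]
    rcases eq_or_ne p a with hpa | hpa
    · subst hpa
      rw [if_pos rfl]
      have hset : (Finset.univ.filter fun s => Function.update f t b s = p)
          = (Finset.univ.filter fun s => f s = p).erase t := by
        ext s
        simp only [Finset.mem_filter, Finset.mem_erase, Finset.mem_univ, true_and,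
          Function.update_apply]
        rcases eq_or_ne s t with rfl | hst
        · simp [hpb.symm, hft]
        · simp [hst]
      rw [hset, Finset.card_erase_of_mem (by simp [hft])]
    · rw [if_neg hpa]
      congr 1
      ext s
      simp only [Finset.mem_filter, Finset.mem_univ, true_and, Function.update_apply]
      rcases eq_or_ne s t with rfl | hst
      · simp [hpb.symm, hft, hpa.symm]
      · simp [hst]

variable (i j : Fin m) (D : Module.End ℤ (LetterplaceAlgebra L m))
  (hLeibniz : ∀ x y : LetterplaceAlgebra L m, D (x * y) = D x * y + x * D y)
  (hgen : ∀ (x : L) (k : Fin m), D (lpVar x k) = if k = i then lpVar x j else 0)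

include hLeibniz hgen

lemma D_lpProd (w : Fin ℓ → L) (f : Fin ℓ → Fin m) :
    D (List.ofFn fun t => lpVar (w t) (f t)).prod =
      ∑ t ∈ Finset.univ.filter (fun t => f t = i),
        (List.ofFn fun s => lpVar (w s) (Function.update f t j s)).prod := by
  rw [D_ofFn_prod D hLeibniz,
    ← Finset.sum_filter_add_sum_filter_not Finset.univ (fun t => f t = i)]
  have h2 : ∀ t ∈ Finset.univ.filter (fun t => ¬ f t = i),
      (List.ofFn (Function.update (fun s => lpVar (w s) (f s)) t (D (lpVar (w t) (f t))))).prod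
        = 0 := by
    intro t ht
    simp only [Finset.mem_filter] at ht
    rw [hgen, if_neg ht.2]
    apply List.prod_eq_zero
    rw [List.mem_ofFn]
    exact ⟨t, by simp⟩
  rw [Finset.sum_congr rfl h2, Finset.sum_const_zero, add_zero]
  refine Finset.sum_congr rfl fun t ht => ?_
  simp only [Finset.mem_filter] at ht
  rw [hgen, if_pos ht.2]
  congr 1
  congr 1
  funext s
  rcases eq_or_ne s t with rfl | hst
  · simp
  · rw [Function.update_of_ne hst, Function.update_of_ne hst]

end Main
section Step

variable {L : Type*} [DecidableEq L] {m : ℕ} {ℓ : ℕ}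
variable (i j : Fin m) (D : Module.End ℤ (LetterplaceAlgebra L m))
  (hLeibniz : ∀ x y : LetterplaceAlgebra L m, D (x * y) = D x * y + x * D y)
  (hgen : ∀ (x : L) (k : Fin m), D (lpVar x k) = if k = i then lpVar x j else 0)

include hLeibniz hgen

lemma D_biproduct_zero (w : Fin ℓ → L) (q : Fin m → ℕ) (hq : q i = 0) :
    D (biproduct w q) = 0 := by
  unfold biproduct
  rw [map_sum, Finset.sum_congr rfl (fun f _ => D_lpProd i j D hLeibniz hgen w f)]
  refine Finset.sum_eq_zero fun f hf => ?_
  simp only [Finset.mem_filter, Finset.mem_univ, true_and] at hf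
  have : (Finset.univ.filter fun t => f t = i) = ∅ :=
    Finset.card_eq_zero.mp ((hf i).trans hq)
  rw [this, Finset.sum_empty]

lemma D_biproduct_step (hij : i ≠ j) (w : Fin ℓ → L) (q : Fin m → ℕ) (hq : 1 ≤ q i) :
    D (biproduct w q) = (q j + 1) •
      biproduct w (Function.update (Function.update q i (q i - 1)) j (q j + 1)) := by
  set q' : Fin m → ℕ := Function.update (Function.update q i (q i - 1)) j (q j + 1) with hq'
  have hq'app : ∀ p, q' p = if p = j then q j + 1 else if p = i then q i - 1 else q p := by
    intro p
    rcases eq_or_ne p j with rfl | hpj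
    · simp [hq']
    · rcases eq_or_ne p i with rfl | hpi
      · simp [hq', Function.update_of_ne hij, hpj]
      · rw [hq', Function.update_of_ne hpj, Function.update_of_ne hpi, if_neg hpj, if_neg hpi]
  unfold biproduct
  rw [map_sum, Finset.sum_congr rfl (fun f _ => D_lpProd i j D hLeibniz hgen w f),
    Finset.sum_sigma']
  have key : (∑ x ∈ (Finset.univ.filter
        (fun f : Fin ℓ → Fin m =>
          ∀ p, (Finset.univ.filter fun t => f t = p).card = q p)).sigma
        (fun f => Finset.univ.filter fun t => f t = i),
      (List.ofFn fun s => lpVar (w s) (Function.update x.1 x.2 j s)).prod)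
      = ∑ y ∈ (Finset.univ.filter
        (fun g : Fin ℓ → Fin m =>
          ∀ p, (Finset.univ.filter fun t => g t = p).card = q' p)).sigma
        (fun g => Finset.univ.filter fun t => g t = j),
      (List.ofFn fun s => lpVar (w s) (y.1 s)).prod := by
    refine Finset.sum_nbij'
      (i := fun x : Σ _ : Fin ℓ → Fin m, Fin ℓ =>
        (⟨Function.update x.1 x.2 j, x.2⟩ : Σ _ : Fin ℓ → Fin m, Fin ℓ))
      (j := fun y : Σ _ : Fin ℓ → Fin m, Fin ℓ =>
        (⟨Function.update y.1 y.2 i, y.2⟩ : Σ _ : Fin ℓ → Fin m, Fin ℓ))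
      ?_ ?_ ?_ ?_ ?_
    · rintro ⟨f, t⟩ hx
      simp only [Finset.mem_sigma, Finset.mem_filter, Finset.mem_univ, true_and] at hx ⊢
      obtain ⟨hfS, hft⟩ := hx
      refine ⟨fun p => ?_, by simp⟩
      rw [card_update_filter f t hij hft p, hfS p, hq'app p]
      rcases eq_or_ne p j with rfl | hpj
      · simp
      · rcases eq_or_ne p i with rfl | hpi
        · simp [hij, hpj]
        · simp [hpj, hpi]
    · rintro ⟨g, t⟩ hy
      simp only [Finset.mem_sigma, Finset.mem_filter, Finset.mem_univ, true_and] at hy ⊢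
      obtain ⟨hgS, hgt⟩ := hy
      refine ⟨fun p => ?_, by simp⟩
      rw [card_update_filter g t hij.symm hgt p, hgS p]
      rcases eq_or_ne p i with rfl | hpi
      · rw [if_pos rfl, hq'app, if_neg hij, if_pos rfl]
        omega
      · rw [if_neg hpi]
        rcases eq_or_ne p j with rfl | hpj
        · rw [if_pos rfl, hq'app, if_pos rfl]; omega
        · rw [if_neg hpj, hq'app, if_neg hpj, if_neg hpi]
    · rintro ⟨f, t⟩ hx
      simp only [Finset.mem_sigma, Finset.mem_filter, Finset.mem_univ, true_and] at hx
      simp only [Sigma.mk.inj_iff, heq_eq_eq, and_true]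
      rw [Function.update_idem, ← hx.2, Function.update_eq_self]
    · rintro ⟨g, t⟩ hy
      simp only [Finset.mem_sigma, Finset.mem_filter, Finset.mem_univ, true_and] at hy
      simp only [Sigma.mk.inj_iff, heq_eq_eq, and_true]
      rw [Function.update_idem, ← hy.2, Function.update_eq_self]
    · rintro ⟨f, t⟩ _
      rfl
  rw [key, Finset.sum_sigma]
  rw [Finset.smul_sum]
  refine Finset.sum_congr rfl fun g hg => ?_
  simp only [Finset.mem_filter, Finset.mem_univ, true_and] at hg
  show (∑ _s ∈ Finset.filter (fun t => g t = j) Finset.univ,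
      (List.ofFn fun u => lpVar (w u) (g u)).prod) = _
  rw [Finset.sum_const, hg j, hq'app, if_pos rfl]

end Step

theorem stmt14 {L : Type*} [DecidableEq L] {m : ℕ} (i j : Fin m) (hij : i < j)
    (D : Module.End ℤ (LetterplaceAlgebra L m))
    (hLeibniz : ∀ x y : LetterplaceAlgebra L m, D (x * y) = D x * y + x * D y)
    (hgen : ∀ (x : L) (k : Fin m), D (lpVar x k) = if k = i then lpVar x j else 0)
    {ℓ : ℕ} (w : Fin ℓ → L) (q : Fin m → ℕ) (h : ℕ) :
    (h ≤ q i →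
      (D ^ h) (biproduct w q) =
        ((q j + h).factorial / (q j).factorial) •
          biproduct w (Function.update (Function.update q i (q i - h)) j (q j + h))) ∧
    (q i < h → (D ^ h) (biproduct w q) = 0) := by
  have hij' : i ≠ j := ne_of_lt hij
  induction h generalizing q with
  | zero =>
    refine ⟨fun _ => ?_, fun h0 => absurd h0 (by omega)⟩
    rw [pow_zero, Module.End.one_apply, Nat.add_zero, Nat.sub_zero,
      Nat.div_self (Nat.factorial_pos _), Function.update_eq_self, Function.update_eq_self,
      one_smul]
  | succ h ih =>
    set q1 : Fin m → ℕ := Function.update (Function.update q i (q i - 1)) j (q j + 1)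
      with hq1
    have hq1i : q1 i = q i - 1 := by
      rw [hq1, Function.update_of_ne hij', Function.update_self]
    have hq1j : q1 j = q j + 1 := by rw [hq1, Function.update_self]
    have hupd : Function.update (Function.update q1 i (q1 i - h)) j (q1 j + h)
        = Function.update (Function.update q i (q i - (h + 1))) j (q j + (h + 1)) := by
      funext p
      rcases eq_or_ne p j with rfl | hpj
      · rw [Function.update_self, Function.update_self, hq1j]; omega
      · rw [Function.update_of_ne hpj, Function.update_of_ne hpj]
        rcases eq_or_ne p i with rfl | hpi
        · rw [Function.update_self, Function.update_self, hq1i]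
          omega
        · rw [Function.update_of_ne hpi, Function.update_of_ne hpi, hq1,
            Function.update_of_ne hpj, Function.update_of_ne hpi]
    constructor
    · intro hle
      have h1 : 1 ≤ q i := by omega
      rw [pow_succ, Module.End.mul_apply,
        D_biproduct_step i j D hLeibniz hgen hij' w q h1, map_nsmul,
        (ih q1).1 (by omega), smul_smul, hupd]
      congr 1
      rw [hq1j]
      obtain ⟨c, hc⟩ := Nat.factorial_dvd_factorial (Nat.le_add_right (q j + 1) h)
      have e1 : q j + (h + 1) = q j + 1 + h := by omega
      have e2 : (q j + 1 + h).factorial / (q j + 1).factorial = c := by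
        rw [hc]; exact Nat.mul_div_cancel_left _ (Nat.factorial_pos _)
      have e3 : (q j + 1 + h).factorial / (q j).factorial = (q j + 1) * c := by
        rw [hc, Nat.factorial_succ, mul_right_comm]
        exact Nat.mul_div_cancel _ (Nat.factorial_pos _)
      rw [e1, e2, e3]
    · intro hlt
      rcases Nat.eq_zero_or_pos (q i) with h0 | h1
      · rw [pow_succ, Module.End.mul_apply,
          D_biproduct_zero i j D hLeibniz hgen w q h0, map_zero]
      · rw [pow_succ, Module.End.mul_apply,
          D_biproduct_step i j D hLeibniz hgen hij' w q h1, map_nsmul,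
          (ih q1).2 (by omega), smul_zero]
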